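/- Fix non-negative integers m, n, l and a partition κ ⊂ ⟨(m+n)^l⟩. The map (λ, K) ↦ (λ', sub_{n+l}(λ̃, C_{n+l}(K))), where λ̃ denotes the (m, n+l)-complement of λ, is a bijection from the set {(λ, K) : λ ⊂ ⟨m^{n+l}⟩, K an increasing l-element subsequence of (1, …, n+l), sub_{n+l}(λ, K) = κ} onto the set {(μ, ν) : μ, ν partitions with l(μ) ≤ m, l(ν) ≤ n, and μ ⋆_{m,n} ν = κ'}. -/

import Mathlib

open scoped Classical

/-- `f : ℕ → ℕ` represents a partition via its parts `f 1 ≥ f 2 ≥ ⋯`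
(indices start at `1`; we normalize the unused value at `0` by `f 0 = f 1`). -/
def IsPartition (f : ℕ → ℕ) : Prop :=
  f 0 = f 1 ∧ (∀ i j, i ≤ j → f j ≤ f i) ∧ ∃ N, ∀ i, N ≤ i → f i = 0

/-- the partition `f` has length (number of positive parts) at most `r`,
i.e. `l(f) ≤ r`. -/
def LenLE (f : ℕ → ℕ) (r : ℕ) : Prop := ∀ i, r < i → f i = 0

/-- two partitions have the same parts. -/
def EqParts (f g : ℕ → ℕ) : Prop := ∀ i, 1 ≤ i → f i = g i

/-- normalize the value at the (unused) index `0`. -/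
def pad (f : ℕ → ℕ) : ℕ → ℕ := fun i => if i = 0 then f 1 else f i

/-- the multiset `{f i + N - i : i = 1, …, N}`. -/
def hooks (N : ℕ) (f : ℕ → ℕ) : Multiset ℕ :=
  (Multiset.range N).map (fun i => f (i + 1) + N - (i + 1))

/-- `lam` is the `(m,n)`-overlap of `mu` and `nu`, i.e. `mu ⋆_{m,n} nu = lam`:
`lam` is a partition of length at most `m + n` such that the sequence
`(lam i + (m+n) - i)_{i=1..m+n}` is a rearrangement of the concatenation of
`(mu i + m - i)_{i=1..m}` and `(nu j + n - j)_{j=1..n}`. -/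
def IsOverlap (m n : ℕ) (mu nu lam : ℕ → ℕ) : Prop :=
  LenLE lam (m + n) ∧ hooks (m + n) lam = hooks m mu + hooks n nu

/-- `mu ⋆_{m,n} nu = ∞`: the two hook sequences share a common value. -/
def OverlapInfinite (m n : ℕ) (mu nu : ℕ → ℕ) : Prop :=
  ∃ a, a ∈ hooks m mu ∧ a ∈ hooks n nu

/-- the sign `ε_{m,n}(mu, nu)` of the permutation sorting the concatenation of
`(mu i + m - i)_{i=1..m}` and `(nu j + n - j)_{j=1..n}` into strictly decreasing
order, computed as `(-1)` to the number of inversions. -/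
def overlapSign (m n : ℕ) (mu nu : ℕ → ℕ) : ℤ :=
  (-1) ^ (((Finset.range m ×ˢ Finset.range n).filter (fun p =>
    mu (p.1 + 1) + m - (p.1 + 1) < nu (p.2 + 1) + n - (p.2 + 1))).card)

/-- the truncation `(f_1, …, f_r)` of a partition. -/
def truncateP (f : ℕ → ℕ) (r : ℕ) : ℕ → ℕ := pad fun i => if i ≤ r then f i else 0

/-- `μ + ⟨k^l⟩ = (μ_1 + k, …, μ_l + k)`. -/
def addRect (mu : ℕ → ℕ) (k l : ℕ) : ℕ → ℕ := pad fun i => if i ≤ l then mu i + k else 0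

/-- `μ − ⟨k^l⟩ = (μ_1 − k, …, μ_l − k)`. -/
def subRect (mu : ℕ → ℕ) (k l : ℕ) : ℕ → ℕ := pad fun i => if i ≤ l then mu i - k else 0

/-- `ν ∪ a`: `ν` regarded as a sequence of length `r`, with the sequence `a`
appended after position `r`. -/
def concatSeq (nu : ℕ → ℕ) (r : ℕ) (tail : ℕ → ℕ) : ℕ → ℕ :=
  pad fun i => if i ≤ r then nu i else tail (i - r)

/-- the rectangular partition `⟨a^b⟩` (with `b` parts equal to `a`). -/
def rectP (a b : ℕ) : ℕ → ℕ := pad fun i => if i ≤ b then a else 0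

/-- the `(m,n)`-complement `λ̃ = (m − λ_n, …, m − λ_1)` of a partition `λ ⊂ ⟨m^n⟩`. -/
def complSeq (m n : ℕ) (lam : ℕ → ℕ) : ℕ → ℕ :=
  pad fun i => if i ≤ n then m - lam (n + 1 - i) else 0

noncomputable section

/-- the `i`-th part `λ'_i = #{j ≥ 1 : λ_j ≥ i}` of the conjugate partition. -/
def conjPart (f : ℕ → ℕ) (i : ℕ) : ℕ := {j : ℕ | 1 ≤ j ∧ i ≤ f j}.ncard

/-- the conjugate partition `λ'`. -/
def conjP (f : ℕ → ℕ) : ℕ → ℕ := pad fun i => conjPart f i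

/-- the set of integers `k ≤ min{m,n}` with `λ_{n+1−k} ≤ m − k`. -/
def indexSet (m n : ℕ) (lam : ℕ → ℕ) : Set ℤ :=
  {k : ℤ | k ≤ min (m : ℤ) (n : ℤ) ∧ (lam ((n : ℤ) + 1 - k).toNat : ℤ) ≤ (m : ℤ) - k}

/-- `k` is the `(m,n)`-index of `lam`: the largest integer `k ≤ min{m,n}`
with `λ_{n+1−k} ≤ m − k`. -/
def IsIndex (m n : ℕ) (lam : ℕ → ℕ) (k : ℤ) : Prop := IsGreatest (indexSet m n lam) k

/-- the `(m,n)`-index of `lam`. -/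
def indexOf (m n : ℕ) (lam : ℕ → ℕ) : ℤ := sSup (indexSet m n lam)

variable {F : Type*} [Field F]

/-- `Δ(X) = ∏_{i<j} (X_i − X_j)`. -/
def vanDet {n : ℕ} (X : Fin n → F) : F :=
  ∏ i : Fin n, ∏ j : Fin n, if i < j then X i - X j else 1

/-- `Δ(X; Y) = ∏_{x ∈ X, y ∈ Y} (x − y)`. -/
def vanPair {n m : ℕ} (X : Fin n → F) (Y : Fin m → F) : F :=
  ∏ i, ∏ j, (X i - Y j)

/-- the Schur function `s_λ(X)`. -/
def schur {n : ℕ} (lam : ℕ → ℕ) (X : Fin n → F) : F :=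
  if LenLE lam n then
    (Matrix.of fun i j : Fin n =>
      X i ^ (lam ((j : ℕ) + 1) + n - ((j : ℕ) + 1))).det / vanDet X
  else 0

/-- the subsequence of `X` indexed by `I` (in increasing order of indices). -/
def subSeq {n : ℕ} (X : Fin n → F) (I : Finset (Fin n)) : Fin I.card → F :=
  fun j => X (I.orderIsoOfFin rfl j).1

/-- the sign `ε(λ) = (−1)^{λ_1+⋯+λ_{n−k}} (−1)^{mk} (−1)^{k(k−1)/2}` from the
determinantal formula. -/
def LSsign (m n k : ℕ) (lam : ℕ → ℕ) : ℤ :=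
  (-1) ^ (∑ i ∈ Finset.range (n - k), lam (i + 1)) * (-1) ^ (m * k) *
    (-1) ^ (k * (k - 1) / 2)

/-- the Moens–Van der Jeugt block matrix. -/
def LSmat (k : ℕ) {n m : ℕ} (lam : ℕ → ℕ) (X : Fin n → F) (Y : Fin m → F) :
    Matrix (Fin (n + (m - k))) (Fin (n + (m - k))) F :=
  Matrix.of fun r c =>
    if hr : (r : ℕ) < n then
      if hc : (c : ℕ) < m then (X ⟨(r : ℕ), hr⟩ - Y ⟨(c : ℕ), hc⟩)⁻¹
      else X ⟨(r : ℕ), hr⟩ ^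
        ((lam ((c : ℕ) - m + 1) : ℤ) + (n : ℤ) - (m : ℤ) - (((c : ℕ) - m + 1 : ℕ) : ℤ))
    else
      if hc : (c : ℕ) < m then
        Y ⟨(c : ℕ), hc⟩ ^
          ((conjPart lam ((r : ℕ) - n + 1) : ℤ) + (m : ℤ) - (n : ℤ) - (((r : ℕ) - n + 1 : ℕ) : ℤ))
      else 0

/-- the Littlewood–Schur function `LS_λ(−X; Y)`, defined by the determinantal
formula of Moens and Van der Jeugt: it is `0` if the `(m,n)`-index `k` of `λ` is
negative, and otherwise equals `ε(λ) · Δ(Y;X)/(Δ(X)Δ(Y)) · det M`. -/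
def LS {n m : ℕ} (lam : ℕ → ℕ) (X : Fin n → F) (Y : Fin m → F) : F :=
  if indexOf m n lam < 0 then 0
  else (LSsign m n (indexOf m n lam).toNat lam : F) * vanPair Y X /
    (vanDet X * vanDet Y) * (LSmat (indexOf m n lam).toNat lam X Y).det

/-- `walkMu lam n I` is the partition with `i`-th part `λ_{V_i} + n + i − V_i`,
where `V_1 < ⋯ < V_card(I)` is the increasing (1-based) enumeration of `I`. -/
def walkMu (lam : ℕ → ℕ) (n : ℕ) {N : ℕ} (I : Finset (Fin N)) : ℕ → ℕ :=
  pad fun i =>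
    if h : 1 ≤ i ∧ i ≤ I.card then
      lam (((I.orderIsoOfFin rfl ⟨i - 1, by omega⟩).1 : ℕ) + 1) +
        (n + i - (((I.orderIsoOfFin rfl ⟨i - 1, by omega⟩).1 : ℕ) + 1))
    else 0

/-- `C_N(K)`: the set `{N − j + 1 : j ∈ {1,…,N} ∖ K}`. -/
def Cfin (N : ℕ) (K : Finset ℕ) : Finset ℕ :=
  (Finset.Icc 1 N \ K).image (fun j => N + 1 - j)

/-- the subpartition `sub_N(λ, s)`: its `j`-th part is
`λ_{s_j} + (N − s_j) − (r − j)`, where `s_1 < ⋯ < s_r` are the elements of `s`. -/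
def subPartF (N : ℕ) (lam : ℕ → ℕ) (s : Finset ℕ) : ℕ → ℕ :=
  pad fun j =>
    if h : 1 ≤ j ∧ j ≤ s.card then
      lam ((s.orderIsoOfFin rfl ⟨j - 1, by omega⟩).1) +
        (N - (s.orderIsoOfFin rfl ⟨j - 1, by omega⟩).1) - (s.card - j)
    else 0

end

/-- `α` is a quasi-partition associated to the subset with membership
predicate `inV` (the complement being taken inside `{1, …, m+n}`). -/
def IsQuasiPartition (m n : ℕ) (inV : ℕ → Prop) (α : ℕ → ℤ) : Prop :=
  0 ≤ α (m + n) ∧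
  (∀ i, 1 < i → i < m + n → ¬(α (i - 1) < α i ∧ α i < α (i + 1))) ∧
  (∀ i, 1 ≤ i → i < m + n → ((inV i ↔ inV (i + 1)) → α (i + 1) ≤ α i)) ∧
  (∀ i, 1 ≤ i → i < m + n → (¬(inV i ↔ inV (i + 1)) → α (i + 1) ≤ α i + 1))

/-- the integer sequence `α_1, …, α_N` is a partition: non-increasing and
non-negative. -/
def IsPartitionSeqZ (N : ℕ) (α : ℕ → ℤ) : Prop :=
  (∀ i j, 1 ≤ i → i ≤ j → j ≤ N → α j ≤ α i) ∧ ∀ i, 1 ≤ i → i ≤ N → 0 ≤ α i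

namespace SPB

/-- antitone on indices `≥ 1`. -/
def Anti1 (f : ℕ → ℕ) : Prop := ∀ i j, 1 ≤ i → i ≤ j → f j ≤ f i

lemma anti1_of (hf : IsPartition f) : Anti1 f := fun i j _ hij => hf.2.1 i j hij

lemma anti1_of_step {f : ℕ → ℕ} (h : ∀ i, 1 ≤ i → f (i + 1) ≤ f i) : Anti1 f := by
  intro i j hi hij
  induction j, hij using Nat.le_induction with
  | base => exact le_rfl
  | succ k hk ih => exact (h k (le_trans hi hk)).trans ih

lemma isPartition_of {f : ℕ → ℕ} (h0 : f 0 = f 1) (hf : Anti1 f) (N : ℕ)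
    (hN : LenLE f N) : IsPartition f := by
  refine ⟨h0, ?_, N + 1, fun i hi => hN i (by omega)⟩
  intro i j hij
  rcases Nat.eq_zero_or_pos i with rfl | hi
  · rcases Nat.eq_zero_or_pos j with rfl | hj
    · exact le_rfl
    · rw [h0]; exact hf 1 j le_rfl hj
  · exact hf i j hi hij

lemma range_map_succ (N : ℕ) :
    (Multiset.range N).map (· + 1) = (Finset.Icc 1 N).val := by
  have h1 : Finset.Icc 1 N = (Finset.range N).image (· + 1) := by
    ext a; simp only [Finset.mem_Icc, Finset.mem_image, Finset.mem_range]
    constructor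
    · rintro ⟨h1, h2⟩; exact ⟨a - 1, by omega, by omega⟩
    · rintro ⟨b, hb, rfl⟩; omega
  rw [h1, Finset.image_val_of_injOn (fun a _ b _ hab => by omega)]
  rfl

lemma hooks_eq_Icc (N : ℕ) (f : ℕ → ℕ) :
    hooks N f = (Finset.Icc 1 N).val.map (fun j => f j + (N - j)) := by
  rw [← range_map_succ, Multiset.map_map, hooks]
  apply Multiset.map_congr rfl
  intro i hi
  rw [Multiset.mem_range] at hi
  simp only [Function.comp_apply]
  omega

lemma hk_strict {f : ℕ → ℕ} (hf : Anti1 f) {N i j : ℕ} (hi : 1 ≤ i) (hij : i < j)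
    (hj : j ≤ N) : f j + (N - j) < f i + (N - i) := by
  have := hf i j hi hij.le
  omega

lemma hk_injOn {f : ℕ → ℕ} (hf : Anti1 f) (N : ℕ) :
    Set.InjOn (fun j => f j + (N - j)) ↑(Finset.Icc 1 N) := by
  intro a ha b hb hab
  simp only [Finset.coe_Icc, Set.mem_Icc] at ha hb
  by_contra hne
  rcases Nat.lt_or_ge a b with h | h
  · exact absurd hab (Nat.ne_of_gt (hk_strict hf ha.1 h hb.2))
  · exact absurd hab (Nat.ne_of_lt (hk_strict hf hb.1 (by omega) ha.2))

lemma hooks_nodup {f : ℕ → ℕ} (hf : Anti1 f) (N : ℕ) : (hooks N f).Nodup := by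
  rw [hooks_eq_Icc]
  exact Multiset.Nodup.map_on (fun a ha b hb => hk_injOn hf N (by simpa using ha) (by simpa using hb))
    (Finset.Icc 1 N).nodup

lemma hooks_lt {f : ℕ → ℕ} (hf : Anti1 f) {N c : ℕ} (hc : f 1 ≤ c) :
    ∀ a ∈ hooks N f, a < c + N := by
  intro a ha
  rw [hooks_eq_Icc] at ha
  obtain ⟨j, hj, rfl⟩ := Multiset.mem_map.1 ha
  rw [Finset.mem_val, Finset.mem_Icc] at hj
  have := hf 1 j le_rfl hj.1
  omega

lemma hooks_congr {f g : ℕ → ℕ} (N : ℕ) (h : ∀ j, 1 ≤ j → j ≤ N → f j = g j) :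
    hooks N f = hooks N g := by
  rw [hooks_eq_Icc, hooks_eq_Icc]
  apply Multiset.map_congr rfl
  intro j hj
  have hj' := Finset.mem_Icc.1 (Finset.mem_val.mp hj)
  rw [h j hj'.1 hj'.2]

lemma hooks_card (N : ℕ) (f : ℕ → ℕ) : Multiset.card (hooks N f) = N := by
  rw [hooks]; simp

lemma count_hooks (f : ℕ → ℕ) (N t : ℕ) :
    Multiset.countP (fun a => t ≤ a) (hooks N f) =
      ((Finset.Icc 1 N).filter (fun j => t ≤ f j + (N - j))).card := by
  rw [hooks_eq_Icc, Multiset.countP_map]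
  rfl

lemma part_le_iff {f : ℕ → ℕ} (hf : Anti1 f) {N i : ℕ} (hi : 1 ≤ i) (hiN : i ≤ N)
    (t : ℕ) : t ≤ f i + (N - i) ↔ i ≤ Multiset.countP (fun a => t ≤ a) (hooks N f) := by
  rw [count_hooks]
  constructor
  · intro ht
    have hsub : Finset.Icc 1 i ⊆ (Finset.Icc 1 N).filter (fun j => t ≤ f j + (N - j)) := by
      intro j hj
      rw [Finset.mem_Icc] at hj
      rw [Finset.mem_filter, Finset.mem_Icc]
      have := hf j i hj.1 hj.2
      exact ⟨⟨hj.1, by omega⟩, by omega⟩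
    calc i = (Finset.Icc 1 i).card := by simp
    _ ≤ _ := Finset.card_le_card hsub
  · intro hc
    by_contra ht
    push_neg at ht
    have hsub : (Finset.Icc 1 N).filter (fun j => t ≤ f j + (N - j)) ⊆ Finset.Icc 1 (i - 1) := by
      intro j hj
      rw [Finset.mem_filter, Finset.mem_Icc] at hj
      rw [Finset.mem_Icc]
      refine ⟨hj.1.1, ?_⟩
      by_contra hji
      push_neg at hji
      have := hf i j hi (by omega)
      omega
    have := Finset.card_le_card hsub
    simp only [Nat.card_Icc] at this
    omega

lemma eq_of_hooks_eq {f g : ℕ → ℕ} (hf : Anti1 f) (hg : Anti1 g) {N : ℕ}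
    (h : hooks N f = hooks N g) {i : ℕ} (hi : 1 ≤ i) (hiN : i ≤ N) : f i = g i := by
  have h1 : f i ≤ g i := by
    have := (part_le_iff hf hi hiN (f i + (N - i))).1 le_rfl
    rw [h] at this
    have := (part_le_iff hg hi hiN (f i + (N - i))).2 this
    omega
  have h2 : g i ≤ f i := by
    have := (part_le_iff hg hi hiN (g i + (N - i))).1 le_rfl
    rw [← h] at this
    have := (part_le_iff hf hi hiN (g i + (N - i))).2 this
    omega
  omega

end SPB
namespace SPB

lemma conjPart_eq_card {f : ℕ → ℕ} {N i : ℕ} (hN : LenLE f N) (hi : 1 ≤ i) :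
    conjPart f i = ((Finset.Icc 1 N).filter (fun j => i ≤ f j)).card := by
  unfold conjPart
  have hset : {j : ℕ | 1 ≤ j ∧ i ≤ f j} =
      ↑((Finset.Icc 1 N).filter (fun j => i ≤ f j)) := by
    ext j
    simp only [Set.mem_setOf_eq, Finset.coe_filter, Finset.mem_Icc]
    constructor
    · rintro ⟨hj, hij⟩
      refine ⟨⟨hj, ?_⟩, hij⟩
      by_contra hjN
      push_neg at hjN
      have := hN j hjN
      omega
    · rintro ⟨⟨hj, _⟩, hij⟩
      exact ⟨hj, hij⟩
  rw [hset, Set.ncard_coe_finset]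

lemma conjPart_congr {f g : ℕ → ℕ} (h : ∀ j, 1 ≤ j → f j = g j) (i : ℕ) :
    conjPart f i = conjPart g i := by
  unfold conjPart
  congr 1
  ext j
  simp only [Set.mem_setOf_eq]
  constructor
  · rintro ⟨hj, hij⟩; exact ⟨hj, (h j hj) ▸ hij⟩
  · rintro ⟨hj, hij⟩; exact ⟨hj, (h j hj).symm ▸ hij⟩

lemma conjPart_galois {f : ℕ → ℕ} (hf : Anti1 f) {N : ℕ} (hN : LenLE f N)
    {i j : ℕ} (hi : 1 ≤ i) (hj : 1 ≤ j) : i ≤ f j ↔ j ≤ conjPart f i := by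
  rw [conjPart_eq_card hN hi]
  constructor
  · intro hij
    have hjN : j ≤ N := by
      by_contra hjN
      push_neg at hjN
      have := hN j hjN
      omega
    have hsub : Finset.Icc 1 j ⊆ (Finset.Icc 1 N).filter (fun k => i ≤ f k) := by
      intro k hk
      rw [Finset.mem_Icc] at hk
      rw [Finset.mem_filter, Finset.mem_Icc]
      have := hf k j hk.1 hk.2
      exact ⟨⟨hk.1, by omega⟩, by omega⟩
    calc j = (Finset.Icc 1 j).card := by simp
    _ ≤ _ := Finset.card_le_card hsub
  · intro hc
    by_contra hij
    push_neg at hij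
    have hsub : (Finset.Icc 1 N).filter (fun k => i ≤ f k) ⊆ Finset.Icc 1 (j - 1) := by
      intro k hk
      rw [Finset.mem_filter, Finset.mem_Icc] at hk
      rw [Finset.mem_Icc]
      refine ⟨hk.1.1, ?_⟩
      by_contra hkj
      push_neg at hkj
      have := hf j k hj (by omega)
      omega
    have := Finset.card_le_card hsub
    simp only [Nat.card_Icc] at this
    omega

lemma conjPart_le {f : ℕ → ℕ} {N i : ℕ} (hN : LenLE f N) (hi : 1 ≤ i) :
    conjPart f i ≤ N := by
  rw [conjPart_eq_card hN hi]
  calc ((Finset.Icc 1 N).filter (fun j => i ≤ f j)).card ≤ (Finset.Icc 1 N).card :=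
        Finset.card_le_card (Finset.filter_subset _ _)
  _ = N := by simp

lemma conjPart_eq_zero {f : ℕ → ℕ} (hf : Anti1 f) {c i : ℕ} (hc : f 1 ≤ c)
    (hci : c < i) : conjPart f i = 0 := by
  unfold conjPart
  convert Set.ncard_empty ℕ
  ext j
  simp only [Set.mem_setOf_eq, Set.mem_empty_iff_false, iff_false, not_and]
  intro hj
  have := hf 1 j le_rfl hj
  omega

lemma conjPart_anti {f : ℕ → ℕ} {N : ℕ} (hN : LenLE f N) {i i' : ℕ} (hi : 1 ≤ i)
    (hii : i ≤ i') : conjPart f i' ≤ conjPart f i := by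
  rw [conjPart_eq_card hN hi, conjPart_eq_card hN (le_trans hi hii)]
  apply Finset.card_le_card
  intro j hj
  rw [Finset.mem_filter] at hj ⊢
  exact ⟨hj.1, by omega⟩

lemma conjP_pos {f : ℕ → ℕ} {i : ℕ} (hi : 1 ≤ i) : conjP f i = conjPart f i := by
  unfold conjP pad
  rw [if_neg (by omega)]

lemma conjP_zero (f : ℕ → ℕ) : conjP f 0 = conjPart f 1 := rfl

lemma anti1_conjP {f : ℕ → ℕ} {N : ℕ} (hN : LenLE f N) : Anti1 (conjP f) := by
  intro i j hi hij
  rw [conjP_pos hi, conjP_pos (le_trans hi hij)]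
  exact conjPart_anti hN hi hij

lemma lenLE_conjP {f : ℕ → ℕ} (hf : Anti1 f) {m : ℕ} (hm : f 1 ≤ m) :
    LenLE (conjP f) m := by
  intro i hi
  rw [conjP_pos (by omega)]
  exact conjPart_eq_zero hf hm hi

lemma isPartition_conjP {f : ℕ → ℕ} (hf : Anti1 f) {N : ℕ} (hN : LenLE f N) :
    IsPartition (conjP f) := by
  refine isPartition_of ?_ (anti1_conjP hN) (f 1) (lenLE_conjP hf le_rfl)
  rw [conjP_zero, conjP_pos le_rfl]

lemma conjP_one_le {f : ℕ → ℕ} {N : ℕ} (hN : LenLE f N) : conjP f 1 ≤ N := by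
  rw [conjP_pos le_rfl]
  exact conjPart_le hN le_rfl

lemma conjP_invol {f : ℕ → ℕ} (hf : Anti1 f) {N : ℕ} (hN : LenLE f N) {j : ℕ}
    (hj : 1 ≤ j) : conjPart (conjP f) j = f j := by
  have hlen : LenLE (conjP f) (f 1) := lenLE_conjP hf le_rfl
  rw [conjPart_eq_card hlen hj]
  have hflt : (Finset.Icc 1 (f 1)).filter (fun i => j ≤ conjP f i) = Finset.Icc 1 (f j) := by
    ext i
    rw [Finset.mem_filter, Finset.mem_Icc, Finset.mem_Icc]
    constructor
    · rintro ⟨⟨hi1, _⟩, hji⟩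
      rw [conjP_pos hi1] at hji
      exact ⟨hi1, (conjPart_galois hf hN hi1 hj).2 hji⟩
    · rintro ⟨hi1, hifj⟩
      have hf1 : f j ≤ f 1 := hf 1 j le_rfl hj
      refine ⟨⟨hi1, by omega⟩, ?_⟩
      rw [conjP_pos hi1]
      exact (conjPart_galois hf hN hi1 hj).1 hifj
  rw [hflt]
  simp

end SPB
namespace SPB

lemma reflect_injOn (c : ℕ) : Set.InjOn (fun a => c - a) {a : ℕ | a ≤ c} := by
  intro a ha b hb hab
  simp only [Set.mem_setOf_eq] at ha hb
  dsimp only at hab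
  omega

lemma map_reflect_reflect {c : ℕ} {s : Multiset ℕ} (hs : ∀ a ∈ s, a ≤ c) :
    (s.map (fun a => c - a)).map (fun a => c - a) = s := by
  rw [Multiset.map_map]
  calc s.map ((fun a => c - a) ∘ (fun a => c - a)) = s.map id := by
        apply Multiset.map_congr rfl
        intro a ha
        have := hs a ha
        simp only [Function.comp_apply, id]
        omega
  _ = s := Multiset.map_id s

/-- The hook complement lemma: for a partition `f ⊂ ⟨m^N⟩`, the hooks of `f`
(length `N`) together with the reflected hooks of the conjugate (length `m`)
make up all of `{0, …, m + N - 1}`. -/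
lemma compl_hooks {f : ℕ → ℕ} (hf : Anti1 f) {m N : ℕ} (hN : LenLE f N)
    (hm : f 1 ≤ m) :
    hooks N f + (hooks m (conjP f)).map (fun a => m + N - 1 - a) =
      Multiset.range (m + N) := by
  set A := hooks N f with hA
  set B := (hooks m (conjP f)).map (fun a => m + N - 1 - a) with hB
  have hanti : Anti1 (conjP f) := anti1_conjP hN
  have hc1 : conjP f 1 ≤ N := conjP_one_le hN
  have hBmem : ∀ b ∈ hooks m (conjP f), b ≤ m + N - 1 ∧ 1 ≤ m := by
    intro b hb
    have hlt := hooks_lt hanti hc1 b hb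
    rw [hooks_eq_Icc] at hb
    obtain ⟨j, hj, rfl⟩ := Multiset.mem_map.1 hb
    rw [Finset.mem_val, Finset.mem_Icc] at hj
    constructor
    · omega
    · omega
  have hAnodup : A.Nodup := hooks_nodup hf N
  have hBnodup : B.Nodup := by
    rw [hB]
    apply Multiset.Nodup.map_on
    · intro a ha b hb hab
      have ha' := (hBmem a ha).1
      have hb' := (hBmem b hb).1
      omega
    · exact hooks_nodup hanti m
  have hdisj : ∀ a ∈ A, a ∉ B := by
    intro a haA haB
    rw [hA, hooks_eq_Icc] at haA
    obtain ⟨j, hj, hja⟩ := Multiset.mem_map.1 haA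
    rw [Finset.mem_val, Finset.mem_Icc] at hj
    rw [hB] at haB
    obtain ⟨b, hb, hba⟩ := Multiset.mem_map.1 haB
    rw [hooks_eq_Icc] at hb
    obtain ⟨i, hi, hib⟩ := Multiset.mem_map.1 hb
    rw [Finset.mem_val, Finset.mem_Icc] at hi
    rw [conjP_pos hi.1] at hib
    have hcN : conjPart f i ≤ N := conjPart_le hN hi.1
    have hfj : f j ≤ m := le_trans (hf 1 j le_rfl hj.1) hm
    rcases Nat.lt_or_ge (f j) i with hlt | hge
    · -- f j < i, so conjPart f i < j
      have : ¬ (j ≤ conjPart f i) := by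
        intro hcon
        exact absurd ((conjPart_galois hf hN hi.1 hj.1).2 hcon) (by omega)
      omega
    · -- i ≤ f j, so j ≤ conjPart f i
      have : j ≤ conjPart f i := (conjPart_galois hf hN hi.1 hj.1).1 hge
      omega
  have hnodup : (A + B).Nodup := by
    rw [Multiset.nodup_add]
    exact ⟨hAnodup, hBnodup, Multiset.disjoint_left.mpr (fun {a} ha => hdisj a ha)⟩
  have hsub : A + B ⊆ Multiset.range (m + N) := by
    intro a ha
    rw [Multiset.mem_add] at ha
    rw [Multiset.mem_range]
    rcases ha with ha | ha
    · exact (by omega : m + N = N + m) ▸ hooks_lt hf hm a ha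
    · rw [hB] at ha
      obtain ⟨b, hb, rfl⟩ := Multiset.mem_map.1 ha
      have := (hBmem b hb).2
      omega
  have hle : A + B ≤ Multiset.range (m + N) := (Multiset.le_iff_subset hnodup).2 hsub
  apply Multiset.eq_of_le_of_card_le hle
  simp only [Multiset.card_range, Multiset.card_add, Multiset.card_map, hA, hB,
    hooks_card]
  omega

end SPB
namespace SPB

lemma subPartF_apply (N : ℕ) (f : ℕ → ℕ) (s : Finset ℕ) (a : Fin s.card) :
    subPartF N f s (a.val + 1) =
      f (s.orderEmbOfFin rfl a) + (N - s.orderEmbOfFin rfl a)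
        - (s.card - (a.val + 1)) := by
  unfold subPartF pad
  rw [if_neg (by omega)]
  simp only []
  rw [dif_pos (by omega : 1 ≤ a.val + 1 ∧ a.val + 1 ≤ s.card)]
  simp only [Nat.add_sub_cancel, Fin.eta, Finset.coe_orderIsoOfFin_apply]

lemma subPartF_zero_of_gt (N : ℕ) (f : ℕ → ℕ) (s : Finset ℕ) {j : ℕ}
    (h2 : s.card < j) : subPartF N f s j = 0 := by
  unfold subPartF pad
  rw [if_neg (by omega)]
  simp only []
  rw [dif_neg (by omega)]

lemma lenLE_subPartF (N : ℕ) (f : ℕ → ℕ) (s : Finset ℕ) :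
    LenLE (subPartF N f s) s.card := fun i hi => subPartF_zero_of_gt N f s hi

lemma emb_mem_Icc {s : Finset ℕ} {N : ℕ} (hs : s ⊆ Finset.Icc 1 N)
    (i : Fin s.card) : 1 ≤ s.orderEmbOfFin rfl i ∧ s.orderEmbOfFin rfl i ≤ N := by
  have := hs (Finset.orderEmbOfFin_mem s rfl i)
  rwa [Finset.mem_Icc] at this

lemma emb_hook_ge {f : ℕ → ℕ} (hf : Anti1 f) {N : ℕ} {s : Finset ℕ}
    (hs : s ⊆ Finset.Icc 1 N) :
    ∀ (k : ℕ) (i : Fin s.card), i.val + k ≤ s.card - 1 →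
      k ≤ f (s.orderEmbOfFin rfl i) + (N - s.orderEmbOfFin rfl i) := by
  intro k
  induction k with
  | zero => intro i _; omega
  | succ k ih =>
    intro i hik
    have hlt : i.val + 1 < s.card := by omega
    have hmono : s.orderEmbOfFin rfl i < s.orderEmbOfFin rfl ⟨i.val + 1, hlt⟩ :=
      (s.orderEmbOfFin rfl).strictMono (by simp [Fin.lt_def])
    have h1 := emb_mem_Icc hs i
    have h2 := emb_mem_Icc hs ⟨i.val + 1, hlt⟩
    have hstep : f (s.orderEmbOfFin rfl ⟨i.val + 1, hlt⟩)
          + (N - s.orderEmbOfFin rfl ⟨i.val + 1, hlt⟩) <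
        f (s.orderEmbOfFin rfl i) + (N - s.orderEmbOfFin rfl i) :=
      hk_strict hf h1.1 hmono h2.2
    have h3 := ih ⟨i.val + 1, hlt⟩ (by simp only [Fin.val_mk]; omega)
    exact Nat.succ_le_of_lt (Nat.lt_of_le_of_lt h3 hstep)

lemma val_eq_map_emb (s : Finset ℕ) :
    s.val = (Finset.univ.val : Multiset (Fin s.card)).map
      (fun i => (s.orderEmbOfFin rfl i : ℕ)) := by
  have himg : Finset.image (fun i => (s.orderEmbOfFin rfl i : ℕ)) Finset.univ = s := by
    ext a
    simp only [Finset.mem_image, Finset.mem_univ, true_and]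
    constructor
    · rintro ⟨i, rfl⟩; exact Finset.orderEmbOfFin_mem s rfl i
    · intro ha
      have hr : a ∈ Set.range (s.orderEmbOfFin rfl) := by
        rw [Finset.range_orderEmbOfFin]; exact ha
      obtain ⟨i, rfl⟩ := hr
      exact ⟨i, rfl⟩
  conv_lhs => rw [← himg]
  rw [Finset.image_val_of_injOn
    (fun a _ b _ h => (s.orderEmbOfFin rfl).injective h)]

lemma range_eq_map_val (r : ℕ) :
    Multiset.range r = (Finset.univ.val : Multiset (Fin r)).map Fin.val := by
  rw [Fin.univ_def]
  show Multiset.range r = Multiset.map Fin.val (↑(List.finRange r) : Multiset (Fin r))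
  rw [Multiset.map_coe, List.map_coe_finRange_eq_range, Multiset.coe_range]

/-- The hooks of the subpartition `sub_N(f, s)` are the hooks of `f` at the
positions of `s`. -/
lemma hooks_subPartF {f : ℕ → ℕ} (hf : Anti1 f) {N : ℕ} {s : Finset ℕ}
    (hs : s ⊆ Finset.Icc 1 N) :
    hooks s.card (subPartF N f s) = s.val.map (fun j => f j + (N - j)) := by
  rw [hooks, range_eq_map_val, Multiset.map_map, val_eq_map_emb s, Multiset.map_map]
  apply Multiset.map_congr rfl
  intro i _
  simp only [Function.comp_apply]
  rw [subPartF_apply N f s i]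
  have hge := emb_hook_ge hf hs (s.card - (i.val + 1)) i (by omega)
  have hbd := emb_mem_Icc hs i
  omega

lemma anti1_subPartF {f : ℕ → ℕ} (hf : Anti1 f) {N : ℕ} {s : Finset ℕ}
    (hs : s ⊆ Finset.Icc 1 N) : Anti1 (subPartF N f s) := by
  apply anti1_of_step
  intro i hi
  rcases Nat.lt_or_ge s.card (i + 1) with h | h
  · rw [subPartF_zero_of_gt N f s h]; omega
  · have hia : i - 1 < s.card := by omega
    have hib : i < s.card := by omega
    have heqa := subPartF_apply N f s ⟨i - 1, hia⟩
    have heqb := subPartF_apply N f s ⟨i, hib⟩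
    simp only [Fin.val_mk] at heqa heqb
    rw [(by omega : i - 1 + 1 = i)] at heqa
    rw [heqa, heqb]
    have hmono : s.orderEmbOfFin rfl ⟨i - 1, hia⟩ < s.orderEmbOfFin rfl ⟨i, hib⟩ :=
      (s.orderEmbOfFin rfl).strictMono (by simp [Fin.lt_def]; omega)
    have h1 := emb_mem_Icc hs ⟨i - 1, hia⟩
    have h2 := emb_mem_Icc hs ⟨i, hib⟩
    have hstep := hk_strict hf h1.1 hmono h2.2
    have hge := emb_hook_ge hf hs (s.card - (i + 1)) ⟨i, hib⟩ (by simp only [Fin.val_mk]; omega)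
    omega

lemma isPartition_subPartF {f : ℕ → ℕ} (hf : Anti1 f) {N : ℕ} {s : Finset ℕ}
    (hs : s ⊆ Finset.Icc 1 N) : IsPartition (subPartF N f s) :=
  isPartition_of rfl (anti1_subPartF hf hs) s.card (lenLE_subPartF N f s)

end SPB
namespace SPB

lemma complSeq_apply (m N : ℕ) (lam : ℕ → ℕ) {i : ℕ} (h1 : 1 ≤ i) (h2 : i ≤ N) :
    complSeq m N lam i = m - lam (N + 1 - i) := by
  unfold complSeq pad
  rw [if_neg (by omega)]
  simp only []
  rw [if_pos h2]

lemma complSeq_zero_of_gt (m N : ℕ) (lam : ℕ → ℕ) {i : ℕ} (h1 : 1 ≤ i)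
    (h2 : N < i) : complSeq m N lam i = 0 := by
  unfold complSeq pad
  rw [if_neg (by omega)]
  simp only []
  rw [if_neg (by omega)]

lemma anti1_complSeq {lam : ℕ → ℕ} (hlam : Anti1 lam) (m N : ℕ) :
    Anti1 (complSeq m N lam) := by
  intro i j hi hij
  rcases le_or_gt j N with hjN | hjN
  · rw [complSeq_apply m N lam hi (by omega), complSeq_apply m N lam (by omega) hjN]
    have := hlam (N + 1 - j) (N + 1 - i) (by omega) (by omega)
    omega
  · rw [complSeq_zero_of_gt m N lam (by omega) hjN]
    exact Nat.zero_le _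

lemma Cfin_injOn (N : ℕ) (K : Finset ℕ) :
    Set.InjOn (fun j => N + 1 - j) ↑(Finset.Icc 1 N \ K) := by
  intro a ha b hb hab
  rw [Finset.mem_coe, Finset.mem_sdiff, Finset.mem_Icc] at ha hb
  dsimp only at hab
  omega

lemma Cfin_subset (N : ℕ) (K : Finset ℕ) : Cfin N K ⊆ Finset.Icc 1 N := by
  intro a ha
  unfold Cfin at ha
  obtain ⟨j, hj, rfl⟩ := Finset.mem_image.1 ha
  rw [Finset.mem_sdiff, Finset.mem_Icc] at hj
  rw [Finset.mem_Icc]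
  omega

lemma Cfin_card {N : ℕ} {K : Finset ℕ} (hK : K ⊆ Finset.Icc 1 N) :
    (Cfin N K).card = N - K.card := by
  unfold Cfin
  rw [Finset.card_image_of_injOn (Cfin_injOn N K), Finset.card_sdiff_of_subset hK, Nat.card_Icc]
  omega

lemma Cfin_val (N : ℕ) (K : Finset ℕ) :
    (Cfin N K).val = (Finset.Icc 1 N \ K).val.map (fun j => N + 1 - j) :=
  Finset.image_val_of_injOn (Cfin_injOn N K)

lemma Cfin_hooks_map {lam : ℕ → ℕ} (hlam : Anti1 lam) {m N : ℕ} (hm : lam 1 ≤ m)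
    (K : Finset ℕ) :
    (Cfin N K).val.map (fun c => complSeq m N lam c + (N - c)) =
      (Finset.Icc 1 N \ K).val.map (fun j => m + N - 1 - (lam j + (N - j))) := by
  rw [Cfin_val, Multiset.map_map]
  apply Multiset.map_congr rfl
  intro j hj
  rw [Finset.mem_val, Finset.mem_sdiff, Finset.mem_Icc] at hj
  simp only [Function.comp_apply]
  rw [complSeq_apply m N lam (by omega) (by omega)]
  rw [(by omega : N + 1 - (N + 1 - j) = j)]
  have hlj : lam j ≤ m := le_trans (hlam 1 j le_rfl hj.1.1) hm
  omega

lemma Icc_val_split {N : ℕ} {K : Finset ℕ} (hK : K ⊆ Finset.Icc 1 N) :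
    (Finset.Icc 1 N).val = K.val + (Finset.Icc 1 N \ K).val := by
  rw [Finset.sdiff_val, add_comm]
  rw [tsub_add_cancel_of_le (Finset.val_le_iff.2 hK)]

end SPB
namespace SPB

/-- derive the hook description of `kap` from the subpartition condition. -/
lemma hooks_kap_eq {lam : ℕ → ℕ} (hlamA : Anti1 lam) {N l : ℕ} {K : Finset ℕ}
    (hKsub : K ⊆ Finset.Icc 1 N) (hKcard : K.card = l) {kap : ℕ → ℕ}
    (hsub : EqParts (subPartF N lam K) kap) :
    hooks l kap = K.val.map (fun j => lam j + (N - j)) := by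
  have h0 := hooks_subPartF hlamA hKsub
  rw [hKcard] at h0
  rw [← h0]
  exact hooks_congr l (fun j hj _ => (hsub j hj).symm)

/-- hook description of the complementary subpartition. -/
lemma hooks_nu_eq {lam : ℕ → ℕ} (hlamA : Anti1 lam) {m N : ℕ} (hlam1 : lam 1 ≤ m)
    (K : Finset ℕ) {nn : ℕ} (hcard : (Cfin N K).card = nn) :
    hooks nn (subPartF N (complSeq m N lam) (Cfin N K)) =
      (Finset.Icc 1 N \ K).val.map (fun j => m + N - 1 - (lam j + (N - j))) := by
  have h0 := hooks_subPartF (anti1_complSeq hlamA m N) (Cfin_subset N K)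
  rw [hcard] at h0
  rw [h0, Cfin_hooks_map hlamA hlam1 K]

end SPB

theorem subpartition_overlap_bijection'
    {m n l : ℕ} (kap : ℕ → ℕ) (hkap : IsPartition kap) (hkl : LenLE kap l)
    (hk1 : kap 1 ≤ m + n) :
    (∀ lam : ℕ → ℕ, ∀ K : Finset ℕ,
      IsPartition lam → LenLE lam (n + l) → lam 1 ≤ m →
      K ⊆ Finset.Icc 1 (n + l) → K.card = l →
      EqParts (subPartF (n + l) lam K) kap →
      IsPartition (conjP lam) ∧ LenLE (conjP lam) m ∧
      IsPartition (subPartF (n + l) (complSeq m (n + l) lam) (Cfin (n + l) K)) ∧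
      LenLE (subPartF (n + l) (complSeq m (n + l) lam) (Cfin (n + l) K)) n ∧
      IsOverlap m n (conjP lam)
        (subPartF (n + l) (complSeq m (n + l) lam) (Cfin (n + l) K)) (conjP kap)) ∧
    (∀ mu nu : ℕ → ℕ, IsPartition mu → LenLE mu m → IsPartition nu → LenLE nu n →
      IsOverlap m n mu nu (conjP kap) →
      ∃! p : (ℕ → ℕ) × Finset ℕ,
        IsPartition p.1 ∧ LenLE p.1 (n + l) ∧ p.1 1 ≤ m ∧
        p.2 ⊆ Finset.Icc 1 (n + l) ∧ p.2.card = l ∧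
        EqParts (subPartF (n + l) p.1 p.2) kap ∧
        EqParts (conjP p.1) mu ∧
        EqParts (subPartF (n + l) (complSeq m (n + l) p.1) (Cfin (n + l) p.2)) nu) := by
  classical
  have hkapA : SPB.Anti1 kap := SPB.anti1_of hkap
  have hκA : SPB.Anti1 (conjP kap) := SPB.anti1_conjP hkl
  have hκ1 : conjP kap 1 ≤ l := SPB.conjP_one_le hkl
  have hκbound : ∀ a ∈ hooks (m + n) (conjP kap), a ≤ m + (n + l) - 1 := by
    intro a ha
    have := SPB.hooks_lt hκA hκ1 a ha
    omega
  have hCK : hooks l kap +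
      (hooks (m + n) (conjP kap)).map (fun a => m + (n + l) - 1 - a) =
      Multiset.range (m + (n + l)) := by
    have h := SPB.compl_hooks hkapA hkl hk1
    rw [Nat.add_assoc m n l] at h
    exact h
  constructor
  · -- forward direction
    intro lam K hlam hlamLen hlam1 hKsub hKcard hsub
    have hlamA : SPB.Anti1 lam := SPB.anti1_of hlam
    have hcomplA := SPB.anti1_complSeq hlamA m (n + l)
    have hCcard : (Cfin (n + l) K).card = n := by
      rw [SPB.Cfin_card hKsub, hKcard]
      omega
    refine ⟨SPB.isPartition_conjP hlamA hlamLen, SPB.lenLE_conjP hlamA hlam1,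
      SPB.isPartition_subPartF hcomplA (SPB.Cfin_subset _ _), ?_,
      SPB.lenLE_conjP hkapA hk1, ?_⟩
    · intro i hi
      exact SPB.subPartF_zero_of_gt _ _ _ (by rw [hCcard]; exact hi)
    · -- the hooks identity
      have hKl : hooks l kap = K.val.map (fun j => lam j + (n + l - j)) :=
        SPB.hooks_kap_eq hlamA hKsub hKcard hsub
      have hνh : hooks n (subPartF (n + l) (complSeq m (n + l) lam) (Cfin (n + l) K)) =
          (Finset.Icc 1 (n + l) \ K).val.map
            (fun j => m + (n + l) - 1 - (lam j + (n + l - j))) :=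
        SPB.hooks_nu_eq hlamA hlam1 K hCcard
      have hνh' : hooks n (subPartF (n + l) (complSeq m (n + l) lam) (Cfin (n + l) K)) =
          ((Finset.Icc 1 (n + l) \ K).val.map (fun j => lam j + (n + l - j))).map
            (fun a => m + (n + l) - 1 - a) := by
        rw [Multiset.map_map]
        exact hνh
      have hCL := SPB.compl_hooks hlamA hlamLen hlam1
      have hsplit : hooks (n + l) lam =
          K.val.map (fun j => lam j + (n + l - j)) +
          (Finset.Icc 1 (n + l) \ K).val.map (fun j => lam j + (n + l - j)) := by
        rw [SPB.hooks_eq_Icc, SPB.Icc_val_split hKsub, Multiset.map_add]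
      have hlbound : ∀ a ∈ hooks m (conjP lam), a ≤ m + (n + l) - 1 := by
        intro a ha
        have := SPB.hooks_lt (SPB.anti1_conjP hlamLen) (SPB.conjP_one_le hlamLen) a ha
        omega
      have hcan : hooks l kap +
          ((Finset.Icc 1 (n + l) \ K).val.map (fun j => lam j + (n + l - j)) +
            (hooks m (conjP lam)).map (fun a => m + (n + l) - 1 - a)) =
          hooks l kap +
            (hooks (m + n) (conjP kap)).map (fun a => m + (n + l) - 1 - a) := by
        calc hooks l kap +
            ((Finset.Icc 1 (n + l) \ K).val.map (fun j => lam j + (n + l - j)) +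
              (hooks m (conjP lam)).map (fun a => m + (n + l) - 1 - a))
            = (hooks l kap +
                (Finset.Icc 1 (n + l) \ K).val.map (fun j => lam j + (n + l - j))) +
              (hooks m (conjP lam)).map (fun a => m + (n + l) - 1 - a) :=
              (add_assoc _ _ _).symm
          _ = hooks (n + l) lam +
              (hooks m (conjP lam)).map (fun a => m + (n + l) - 1 - a) := by
              rw [hsplit, hKl]
          _ = Multiset.range (m + (n + l)) := hCL
          _ = _ := hCK.symm
      have hcan2 := add_left_cancel hcan
      have hfinal := congrArg (Multiset.map (fun a => m + (n + l) - 1 - a)) hcan2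
      rw [Multiset.map_add, SPB.map_reflect_reflect hκbound,
        SPB.map_reflect_reflect hlbound] at hfinal
      -- hfinal : map refl (sdiff.map hk) + hooks m (conjP lam) = hooks (m+n) (conjP kap)
      rw [← hfinal, hνh', add_comm]
  · -- backward direction
    intro mu nu hmu hmuLen hnu hnuLen hov
    obtain ⟨hκlen, hhooks⟩ := hov
    have hmuA : SPB.Anti1 mu := SPB.anti1_of hmu
    have hnuA : SPB.Anti1 nu := SPB.anti1_of hnu
    have hmubound : ∀ a ∈ hooks m mu, a ≤ m + (n + l) - 1 := by
      intro a ha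
      refine hκbound a ?_
      rw [hhooks, Multiset.mem_add]
      exact Or.inl ha
    have hnubound : ∀ a ∈ hooks n nu, a ≤ m + (n + l) - 1 := by
      intro a ha
      refine hκbound a ?_
      rw [hhooks, Multiset.mem_add]
      exact Or.inr ha
    have hmu1 : mu 1 ≤ n + l := by
      rcases Nat.eq_zero_or_pos m with rfl | hm
      · have := hmuLen 1 (by omega)
        omega
      · have h1 : mu 1 + (m - 1) ∈ hooks m mu := by
          rw [SPB.hooks_eq_Icc]
          exact Multiset.mem_map.2 ⟨1, Finset.mem_val.mpr (Finset.mem_Icc.2 ⟨le_rfl, hm⟩), rfl⟩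
        have := hmubound _ h1
        omega
    set lam : ℕ → ℕ := conjP mu with hlamdef
    have hlam : IsPartition lam := SPB.isPartition_conjP hmuA hmuLen
    have hlamA : SPB.Anti1 lam := SPB.anti1_of hlam
    have hlamLen : LenLE lam (n + l) := SPB.lenLE_conjP hmuA hmu1
    have hlam1 : lam 1 ≤ m := by
      rw [hlamdef, SPB.conjP_pos le_rfl]
      exact SPB.conjPart_le hmuLen le_rfl
    have hconj : ∀ j, 1 ≤ j → conjP lam j = mu j := by
      intro j hj
      rw [SPB.conjP_pos hj, hlamdef]
      exact SPB.conjP_invol hmuA hmuLen hj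
    have hCL : hooks (n + l) lam +
        (hooks m mu).map (fun a => m + (n + l) - 1 - a) =
        Multiset.range (m + (n + l)) := by
      have h := SPB.compl_hooks hlamA hlamLen hlam1
      rwa [SPB.hooks_congr m (fun j hj _ => hconj j hj)] at h
    have keyId : hooks (n + l) lam =
        hooks l kap + (hooks n nu).map (fun a => m + (n + l) - 1 - a) := by
      have h2 : hooks l kap + ((hooks m mu).map (fun a => m + (n + l) - 1 - a) +
          (hooks n nu).map (fun a => m + (n + l) - 1 - a)) =
          Multiset.range (m + (n + l)) := by
        rw [← Multiset.map_add]
        rw [← hhooks]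
        exact hCK
      have h4 : hooks (n + l) lam + (hooks m mu).map (fun a => m + (n + l) - 1 - a) =
          (hooks l kap + (hooks n nu).map (fun a => m + (n + l) - 1 - a)) +
            (hooks m mu).map (fun a => m + (n + l) - 1 - a) := by
        calc hooks (n + l) lam + (hooks m mu).map (fun a => m + (n + l) - 1 - a)
            = Multiset.range (m + (n + l)) := hCL
          _ = hooks l kap + ((hooks m mu).map (fun a => m + (n + l) - 1 - a) +
              (hooks n nu).map (fun a => m + (n + l) - 1 - a)) := h2.symm
          _ = _ := by
              rw [add_comm ((hooks m mu).map (fun a => m + (n + l) - 1 - a)),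
                ← add_assoc]
      exact add_right_cancel h4
    set K : Finset ℕ :=
      (Finset.Icc 1 (n + l)).filter (fun j => lam j + (n + l - j) ∈ hooks l kap)
      with hKdef
    have hKsub : K ⊆ Finset.Icc 1 (n + l) := Finset.filter_subset _ _
    have hKmap : K.val.map (fun j => lam j + (n + l - j)) = hooks l kap := by
      have hnd1 : (K.val.map (fun j => lam j + (n + l - j))).Nodup := by
        apply Multiset.Nodup.map_on
        · intro a ha b hb hab
          exact SPB.hk_injOn hlamA (n + l)
            (Finset.mem_coe.2 (hKsub (Finset.mem_val.mp ha)))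
            (Finset.mem_coe.2 (hKsub (Finset.mem_val.mp hb))) hab
        · exact K.nodup
      have hnd2 : (hooks l kap).Nodup := SPB.hooks_nodup hkapA l
      rw [Multiset.Nodup.ext hnd1 hnd2]
      intro a
      constructor
      · intro ha
        obtain ⟨j, hj, rfl⟩ := Multiset.mem_map.1 ha
        have := Finset.mem_filter.1 (Finset.mem_val.mp hj)
        exact this.2
      · intro ha
        have halam : a ∈ hooks (n + l) lam := by
          rw [keyId, Multiset.mem_add]
          exact Or.inl ha
        rw [SPB.hooks_eq_Icc] at halam
        obtain ⟨j, hj, rfl⟩ := Multiset.mem_map.1 halam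
        refine Multiset.mem_map.2 ⟨j, Finset.mem_val.mpr (Finset.mem_filter.2
          ⟨Finset.mem_val.mp hj, ha⟩), rfl⟩
    have hKcard : K.card = l := by
      have := congrArg Multiset.card hKmap
      simp only [Multiset.card_map, SPB.hooks_card] at this
      simpa using this
    have hsplit : hooks (n + l) lam =
        K.val.map (fun j => lam j + (n + l - j)) +
        (Finset.Icc 1 (n + l) \ K).val.map (fun j => lam j + (n + l - j)) := by
      rw [SPB.hooks_eq_Icc, SPB.Icc_val_split hKsub, Multiset.map_add]
    have hsdiff : (Finset.Icc 1 (n + l) \ K).val.map (fun j => lam j + (n + l - j)) =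
        (hooks n nu).map (fun a => m + (n + l) - 1 - a) := by
      apply add_left_cancel (a := K.val.map (fun j => lam j + (n + l - j)))
      rw [← hsplit, keyId, hKmap]
    have hCcard : (Cfin (n + l) K).card = n := by
      rw [SPB.Cfin_card hKsub, hKcard]
      omega
    have hsubEq : EqParts (subPartF (n + l) lam K) kap := by
      intro i hi
      rcases le_or_gt i l with h | h
      · refine SPB.eq_of_hooks_eq (SPB.anti1_subPartF hlamA hKsub) hkapA (N := l)
          ?_ hi h
        have h0 := SPB.hooks_subPartF hlamA hKsub
        rw [hKcard] at h0
        rw [h0, hKmap]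
      · rw [SPB.subPartF_zero_of_gt _ _ _ (by rw [hKcard]; exact h), hkl i h]
    have hνEq : EqParts (subPartF (n + l) (complSeq m (n + l) lam) (Cfin (n + l) K)) nu := by
      have hν : hooks n (subPartF (n + l) (complSeq m (n + l) lam) (Cfin (n + l) K)) =
          hooks n nu := by
        have h1 := SPB.hooks_nu_eq hlamA hlam1 K hCcard
        have h2 : hooks n (subPartF (n + l) (complSeq m (n + l) lam) (Cfin (n + l) K)) =
            ((Finset.Icc 1 (n + l) \ K).val.map (fun j => lam j + (n + l - j))).map
              (fun a => m + (n + l) - 1 - a) := by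
          rw [Multiset.map_map]
          exact h1
        rw [h2, hsdiff, SPB.map_reflect_reflect hnubound]
      intro i hi
      rcases le_or_gt i n with h | h
      · exact SPB.eq_of_hooks_eq
          (SPB.anti1_subPartF (SPB.anti1_complSeq hlamA m (n + l)) (SPB.Cfin_subset _ _))
          hnuA hν hi h
      · rw [SPB.subPartF_zero_of_gt _ _ _ (by rw [hCcard]; exact h), hnuLen i h]
    refine ⟨(lam, K), ⟨hlam, hlamLen, hlam1, hKsub, hKcard, hsubEq,
      fun j hj => hconj j hj, hνEq⟩, ?_⟩
    rintro ⟨lam₂, K₂⟩ ⟨h1, h2, h3, h4, h5, h6, h7, h8⟩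
    dsimp only at h1 h2 h3 h4 h5 h6 h7 h8
    have hlameq : lam₂ = lam := by
      have hpos : ∀ i, 1 ≤ i → lam₂ i = lam i := by
        intro i hi
        have e1 : conjPart (conjP lam₂) i = lam₂ i :=
          SPB.conjP_invol (SPB.anti1_of h1) h2 hi
        have e2 : conjPart (conjP lam₂) i = conjPart mu i :=
          SPB.conjPart_congr h7 i
        have e3 : lam i = conjPart mu i := by
          rw [hlamdef, SPB.conjP_pos hi]
        rw [← e1, e2, e3]
      funext i
      rcases Nat.eq_zero_or_pos i with rfl | hi
      · rw [h1.1, hlam.1]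
        exact hpos 1 le_rfl
      · exact hpos i hi
    subst hlameq
    have hK₂map : K₂.val.map (fun j => lam j + (n + l - j)) = hooks l kap :=
      (SPB.hooks_kap_eq (SPB.anti1_of h1) h4 h5 h6).symm
    have hKeq : K₂ = K := by
      ext j
      rw [hKdef, Finset.mem_filter]
      constructor
      · intro hj
        refine ⟨h4 hj, ?_⟩
        rw [← hK₂map]
        exact Multiset.mem_map.2 ⟨j, Finset.mem_val.mpr hj, rfl⟩
      · rintro ⟨hjIcc, hjh⟩
        rw [← hK₂map] at hjh
        obtain ⟨j', hj', heq⟩ := Multiset.mem_map.1 hjh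
        have : j' = j := SPB.hk_injOn (SPB.anti1_of h1) (n + l)
          (Finset.mem_coe.2 (h4 (Finset.mem_val.mp hj'))) (Finset.mem_coe.2 hjIcc) heq
        rw [← this]
        exact Finset.mem_val.mp hj'
    rw [Prod.mk.injEq]
    exact ⟨rfl, hKeq⟩

theorem subpartition_overlap_bijection
    {m n l : ℕ} (kap : ℕ → ℕ) (hkap : IsPartition kap) (hkl : LenLE kap l)
    (hk1 : kap 1 ≤ m + n) :
    (∀ lam : ℕ → ℕ, ∀ K : Finset ℕ,
      IsPartition lam → LenLE lam (n + l) → lam 1 ≤ m →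
      K ⊆ Finset.Icc 1 (n + l) → K.card = l →
      EqParts (subPartF (n + l) lam K) kap →
      IsPartition (conjP lam) ∧ LenLE (conjP lam) m ∧
      IsPartition (subPartF (n + l) (complSeq m (n + l) lam) (Cfin (n + l) K)) ∧
      LenLE (subPartF (n + l) (complSeq m (n + l) lam) (Cfin (n + l) K)) n ∧
      IsOverlap m n (conjP lam)
        (subPartF (n + l) (complSeq m (n + l) lam) (Cfin (n + l) K)) (conjP kap)) ∧
    (∀ mu nu : ℕ → ℕ, IsPartition mu → LenLE mu m → IsPartition nu → LenLE nu n →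
      IsOverlap m n mu nu (conjP kap) →
      ∃! p : (ℕ → ℕ) × Finset ℕ,
        IsPartition p.1 ∧ LenLE p.1 (n + l) ∧ p.1 1 ≤ m ∧
        p.2 ⊆ Finset.Icc 1 (n + l) ∧ p.2.card = l ∧
        EqParts (subPartF (n + l) p.1 p.2) kap ∧
        EqParts (conjP p.1) mu ∧
        EqParts (subPartF (n + l) (complSeq m (n + l) p.1) (Cfin (n + l) p.2)) nu) := by
  exact subpartition_overlap_bijection' kap hkap hkl hk1
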